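/- Let q be a prime power and suppose that for i = 1, 2, the vectors x_i, y_i ∈ F_{q^2}^n are linearly independent and satisfy x_i* x_i = 0, y_i* y_i = 0, and x_i* y_i ≠ 0. Then there exist an n×n matrix P over F_{q^2} with P* P = I and a nonzero b ∈ F_{q^2} such that P x_1 = x_2 and P y_1 = b y_2. -/

import Mathlib

open Matrix Finset Polynomial

section setup
variable {q : ℕ} {F : Type} [Field F] [Fintype F]

theorem sig_add (hq : IsPrimePow q) (hF : Fintype.card F = q ^ 2) (a b : F) :
    (a + b) ^ q = a ^ q + b ^ q := by
  obtain ⟨p, k, hp, hk, rfl⟩ := hq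
  have hp' : p.Prime := hp.nat_prime
  have hcard : Fintype.card F = p ^ (2 * k) := by rw [hF]; ring
  obtain ⟨p', hc⟩ := CharP.exists F
  haveI := hc
  obtain ⟨m, hpm, hcard'⟩ := FiniteField.card F p'
  have heq : p' ^ (m : ℕ) = p ^ (2 * k) := by rw [← hcard', hcard]
  have hdvd : p' ∣ p ^ (2 * k) := heq ▸ dvd_pow_self p' m.pos.ne'
  have hpp : p' = p := by
    rw [← Nat.prime_dvd_prime_iff_eq hpm hp']
    exact hpm.dvd_of_dvd_pow hdvd
  subst hpp
  haveI : Fact p'.Prime := ⟨hpm⟩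
  exact add_pow_char_pow a b p' k

theorem sig_sig (hF : Fintype.card F = q ^ 2) (a : F) : (a ^ q) ^ q = a := by
  rw [← pow_mul, ← pow_two, ← hF, FiniteField.pow_card]

omit [Fintype F] in
theorem roots_card_bound {d : ℕ} (P : F[X]) (hP : P ≠ 0) (hdeg : P.natDegree ≤ d)
    (s : Finset F) (hs : ∀ c ∈ s, P.IsRoot c) : s.card ≤ d := by
  classical
  have hsub : s ⊆ P.roots.toFinset := by
    intro c hc
    rw [Multiset.mem_toFinset, mem_roots']
    exact ⟨hP, hs c hc⟩
  calc s.card ≤ _ := Finset.card_le_card hsub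
    _ ≤ _ := Multiset.toFinset_card_le _
    _ ≤ _ := (card_roots' _)
    _ ≤ d := hdeg

omit [Fintype F] in
theorem xd_sub_ne_zero {d : ℕ} (hd : 1 ≤ d) (Q : F[X]) (hQ : Q.natDegree < d) :
    (X : F[X]) ^ d - Q ≠ 0 ∧ ((X : F[X]) ^ d - Q).natDegree = d := by
  have hPdeg : ((X : F[X]) ^ d - Q).natDegree = d := by
    rw [natDegree_sub_eq_left_of_natDegree_lt] <;> simp [natDegree_X_pow, hQ]
  refine ⟨fun h => ?_, hPdeg⟩
  rw [h, natDegree_zero] at hPdeg; omega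

/-- Surjectivity of the norm map onto the fixed field. -/
theorem norm_surj (hq : IsPrimePow q) (hF : Fintype.card F = q ^ 2) (a : F)
    (ha : a ^ q = a) : ∃ c : F, c ^ q * c = a := by
  classical
  have hq2 : 2 ≤ q := hq.two_le
  set f : F → F := fun c => c ^ q * c with hf
  set T : Finset F := Finset.image f Finset.univ with hT
  set S : Finset F := Finset.univ.filter (fun a : F => a ^ q = a) with hS
  have hTS : T ⊆ S := by
    intro b hb
    simp only [hT, Finset.mem_image] at hb
    obtain ⟨c, _, rfl⟩ := hb
    simp only [hS, Finset.mem_filter, Finset.mem_univ, true_and, hf]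
    rw [mul_pow, sig_sig hF, mul_comm]
  have hScard : S.card ≤ q := by
    obtain ⟨hne, hdeg⟩ := xd_sub_ne_zero (F := F) (by omega : 1 ≤ q) X
      (by simp [natDegree_X]; omega)
    apply roots_card_bound _ hne hdeg.le
    intro c hc
    simp only [hS, Finset.mem_filter] at hc
    simp [IsRoot, sub_eq_zero, hc.2]
  have hTcard : q ^ 2 ≤ (q + 1) * T.card := by
    have := Finset.card_le_mul_card_image (s := (Finset.univ : Finset F)) (f := f)
      (n := q + 1) ?_
    · rw [← hF] at *; simpa [hT] using this
    · intro b _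
      obtain ⟨hne, hdeg⟩ := xd_sub_ne_zero (F := F) (by omega : 1 ≤ q + 1) (C b)
        (by simp [natDegree_C])
      apply roots_card_bound _ hne hdeg.le
      intro c hc
      simp only [Finset.mem_filter, hf] at hc
      simp [IsRoot, sub_eq_zero, pow_succ, hc.2]
  by_contra hcon
  push_neg at hcon
  have haS : a ∈ S := by simp [hS, ha]
  have haT : a ∉ T := by
    intro h
    simp only [hT, Finset.mem_image] at h
    obtain ⟨c, _, hcq⟩ := h
    exact hcon c hcq
  have hsub2 : T ⊆ S.erase a := fun b hb => Finset.mem_erase.mpr ⟨fun h => haT (h ▸ hb), hTS hb⟩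
  have hTle : T.card ≤ q - 1 := by
    calc T.card ≤ (S.erase a).card := Finset.card_le_card hsub2
      _ = S.card - 1 := Finset.card_erase_of_mem haS
      _ ≤ q - 1 := by omega
  nlinarith [hTcard, hTle, hq2, Nat.sub_add_cancel (by omega : 1 ≤ q)]
end setup

open Matrix Finset Module Polynomial

section herm
variable {q n : ℕ} {F : Type} [Field F]

def herm (q : ℕ) {n : ℕ} {F : Type} [Field F] (u v : Fin n → F) : F :=
  ∑ i, (u i) ^ q * v i

theorem herm_add_right (u v w : Fin n → F) :
    herm q u (v + w) = herm q u v + herm q u w := by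
  simp [herm, mul_add, Finset.sum_add_distrib]

theorem herm_smul_right (c : F) (u v : Fin n → F) :
    herm q u (c • v) = c * herm q u v := by
  simp only [herm, Finset.mul_sum, Pi.smul_apply, smul_eq_mul]
  exact Finset.sum_congr rfl fun i _ => by ring

variable (hadd : ∀ a b : F, (a + b) ^ q = a ^ q + b ^ q)
variable (hss : ∀ a : F, (a ^ q) ^ q = a)
variable (hq1 : 1 ≤ q)

def sigHom {q : ℕ} {F : Type} [Field F] (h1 : ∀ a b : F, (a + b) ^ q = a ^ q + b ^ q)
    (h2 : 1 ≤ q) : F →+ F :=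
  ⟨⟨fun a => a ^ q, zero_pow (by omega)⟩, h1⟩

include hadd hss hq1 in
theorem herm_swap (u v : Fin n → F) : herm q v u = (herm q u v) ^ q := by
  have : (herm q u v) ^ q = sigHom (q := q) hadd hq1 (∑ i, (u i) ^ q * v i) := rfl
  rw [this, map_sum]
  simp only [sigHom, AddMonoidHom.coe_mk, ZeroHom.coe_mk, mul_pow, hss, herm]
  exact Finset.sum_congr rfl fun i _ => mul_comm _ _

theorem herm_smul_left (c : F) (u v : Fin n → F) :
    herm q (c • u) v = c ^ q * herm q u v := by
  simp [herm, Finset.mul_sum, mul_pow, mul_assoc]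

include hadd in
theorem herm_add_left (u v w : Fin n → F) :
    herm q (u + v) w = herm q u w + herm q v w := by
  simp [herm, hadd, add_mul, Finset.sum_add_distrib]

include hadd hq1 in
theorem sig_neg (a : F) : (-a) ^ q = -(a ^ q) :=
  map_neg (sigHom (q := q) hadd hq1) a

include hadd hq1 in
theorem sig_sub (a b : F) : (a - b) ^ q = a ^ q - b ^ q :=
  map_sub (sigHom (q := q) hadd hq1) a b

include hadd hq1 in
theorem herm_sub_left (u v w : Fin n → F) :
    herm q (u - v) w = herm q u w - herm q v w := by
  simp [herm, sig_sub hadd hq1, sub_mul, Finset.sum_sub_distrib]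

theorem herm_sub_right (u v w : Fin n → F) :
    herm q u (v - w) = herm q u v - herm q u w := by
  simp [herm, mul_sub, Finset.sum_sub_distrib]

def hermMap (q : ℕ) (v : Fin n → F) : (Fin n → F) →ₗ[F] F :=
  { toFun := herm q v
    map_add' := herm_add_right v
    map_smul' := fun c u => herm_smul_right c v u }

@[simp] theorem hermMap_apply (v u : Fin n → F) : hermMap q v u = herm q v u := rfl

theorem herm_sum_right {ι : Type*} (u : Fin n → F) (s : Finset ι) (w : ι → Fin n → F) :
    herm q u (∑ j ∈ s, w j) = ∑ j ∈ s, herm q u (w j) :=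
  map_sum (hermMap q u) w s

def Nondeg (q : ℕ) {n : ℕ} {F : Type} [Field F] (W : Submodule F (Fin n → F)) : Prop :=
  ∀ w ∈ W, (∀ u ∈ W, herm q u w = 0) → w = 0

include hadd hss hq1 in
theorem exists_nonisotropic (hex : ∃ c : F, c ^ q ≠ c)
    (W : Submodule F (Fin n → F)) (hW : Nondeg q W) (hbot : W ≠ ⊥) :
    ∃ v ∈ W, herm q v v ≠ 0 := by
  by_contra hcon
  push_neg at hcon
  have key : ∀ u ∈ W, ∀ v ∈ W, herm q u v = 0 := by
    have step : ∀ u ∈ W, ∀ v ∈ W, herm q u v + (herm q u v) ^ q = 0 := by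
      intro u hu v hv
      have h0 := hcon (u + v) (W.add_mem hu hv)
      rw [herm_add_left hadd, herm_add_right, herm_add_right,
        hcon u hu, hcon v hv, herm_swap hadd hss hq1 u v] at h0
      linear_combination h0
    intro u hu v hv
    obtain ⟨c, hc⟩ := hex
    have h1 := step u hu v hv
    have h2 := step (c • u) (W.smul_mem c hu) v hv
    rw [herm_smul_left, mul_pow, hss] at h2
    set t := herm q u v
    -- t^q = -t ; c^q t + c t^q = 0 → (c^q - c) t = 0
    have ht : t ^ q = -t := by linear_combination h1
    rw [ht] at h2
    have : (c ^ q - c) * t = 0 := by ring_nf; ring_nf at h2; linear_combination h2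
    rcases mul_eq_zero.mp this with h | h
    · exact absurd (by linear_combination h) hc
    · exact h
  have : W = ⊥ := by
    rw [Submodule.eq_bot_iff]
    intro w hw
    exact hW w hw (fun u hu => key u hu w hw)
  exact hbot this
end herm

section onb
variable {q n : ℕ} {F : Type} [Field F]
variable (hadd : ∀ a b : F, (a + b) ^ q = a ^ q + b ^ q)
variable (hss : ∀ a : F, (a ^ q) ^ q = a)
variable (hq1 : 1 ≤ q)
variable (hex : ∃ c : F, c ^ q ≠ c)
variable (hnorm : ∀ a : F, a ^ q = a → ∃ c : F, c ^ q * c = a)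


include hadd hss hq1 hex hnorm in
theorem onb : ∀ (m : ℕ) (W : Submodule F (Fin n → F)), Module.finrank F W = m →
    Nondeg q W → ∃ v : Fin m → (Fin n → F), (∀ i, v i ∈ W) ∧
      (∀ w ∈ W, w ∈ Submodule.span F (Set.range v)) ∧
      (∀ i j, herm q (v i) (v j) = if i = j then 1 else 0) := by
  intro m
  induction m with
  | zero =>
    intro W hrk _
    refine ⟨fun i => i.elim0, fun i => i.elim0, ?_, fun i => i.elim0⟩
    have : W = ⊥ := Submodule.finrank_eq_zero.mp hrk
    intro w hw
    rw [this, Submodule.mem_bot] at hw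
    simp [hw]
  | succ m ih =>
    intro W hrk hW
    have hbot : W ≠ ⊥ := by
      intro h
      rw [h, finrank_bot] at hrk
      omega
    obtain ⟨w, hwW, hww⟩ := exists_nonisotropic hadd hss hq1 hex W hW hbot
    -- normalize
    have hfix : (herm q w w)⁻¹ ^ q = (herm q w w)⁻¹ := by
      rw [inv_pow]
      congr 1
      exact (herm_swap hadd hss hq1 w w).symm
    obtain ⟨c, hc⟩ := hnorm _ hfix
    set v₀ : Fin n → F := c • w with hv₀
    have hv₀W : v₀ ∈ W := W.smul_mem c hwW
    have hv₀v₀ : herm q v₀ v₀ = 1 := by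
      rw [hv₀, herm_smul_left, herm_smul_right, ← mul_assoc, hc,
        inv_mul_cancel₀ hww]
    have hv₀ne : v₀ ≠ 0 := by
      intro h
      rw [h] at hv₀v₀
      simp [herm] at hv₀v₀
    -- orthogonal complement inside W
    set W' : Submodule F (Fin n → F) := W ⊓ LinearMap.ker (hermMap q v₀) with hW'
    have hmemW' : ∀ u, u ∈ W' ↔ u ∈ W ∧ herm q v₀ u = 0 := by
      intro u
      simp [hW', LinearMap.mem_ker]
    -- decomposition of elements of W
    have hdecomp : ∀ u ∈ W, u - herm q v₀ u • v₀ ∈ W' := by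
      intro u hu
      rw [hmemW']
      constructor
      · exact W.sub_mem hu (W.smul_mem _ hv₀W)
      · have : herm q v₀ (u - herm q v₀ u • v₀) =
            herm q v₀ u - herm q v₀ u * herm q v₀ v₀ := by
          rw [sub_eq_add_neg, herm_add_right, ← smul_neg, herm_smul_right]
          rw [hv₀v₀]; ring_nf
          rw [show (-v₀ : Fin n → F) = (-1 : F) • v₀ by simp, herm_smul_right, hv₀v₀]
          ring
        rw [this, hv₀v₀]; ring
    -- v₀ ∉ W'
    have hv₀W' : ∀ t : F, t • v₀ ∈ W' → t = 0 := by
      intro t ht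
      rw [hmemW'] at ht
      have := ht.2
      rw [herm_smul_right, hv₀v₀, mul_one] at this
      exact this
    -- spans: W = span {v₀} ⊔ W'
    have hsup : W = Submodule.span F {v₀} ⊔ W' := by
      apply le_antisymm
      · intro u hu
        have h1 : herm q v₀ u • v₀ ∈ Submodule.span F {v₀} :=
          Submodule.smul_mem _ _ (Submodule.mem_span_singleton_self v₀)
        have h2 := hdecomp u hu
        have : u = herm q v₀ u • v₀ + (u - herm q v₀ u • v₀) := by ring_nf
        rw [this]
        exact Submodule.add_mem_sup h1 h2
      · apply sup_le
        · rw [Submodule.span_singleton_le_iff_mem]; exact hv₀W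
        · rw [hW']; exact inf_le_left
    have hdisj : Submodule.span F {v₀} ⊓ W' = ⊥ := by
      rw [Submodule.eq_bot_iff]
      intro u hu
      obtain ⟨t, rfl⟩ := Submodule.mem_span_singleton.mp hu.1
      rw [hv₀W' t hu.2]
      simp
    have hrk' : finrank F W' = m := by
      have h1 := Submodule.finrank_sup_add_finrank_inf_eq (Submodule.span F {v₀}) W'
      rw [hdisj, ← hsup, hrk, finrank_bot, finrank_span_singleton hv₀ne] at h1
      omega
    have hW'nd : Nondeg q W' := by
      intro w' hw' hall
      apply hW w' ((hmemW' w').mp hw').1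
      intro u hu
      have h2 := hdecomp u hu
      have hdec : herm q u w' = herm q (u - herm q v₀ u • v₀) w' +
          (herm q v₀ u) ^ q * herm q v₀ w' := by
        rw [← herm_smul_left, ← herm_add_left hadd]
        congr 1
        ring_nf
      rw [hdec, hall _ h2, ((hmemW' w').mp hw').2]
      ring
    obtain ⟨v', hv'W, hv'span, hv'on⟩ := ih W' hrk' hW'nd
    refine ⟨Fin.cons v₀ v', ?_, ?_, ?_⟩
    · intro i
      refine Fin.cases ?_ ?_ i
      · exact hv₀W
      · intro j
        exact ((hmemW' _).mp (hv'W j)).1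
    · intro u hu
      have h2 : u - herm q v₀ u • v₀ ∈ Submodule.span F (Set.range v') :=
        hv'span _ (hdecomp u hu)
      have hsub : Submodule.span F (Set.range v') ≤
          Submodule.span F (Set.range (Fin.cons v₀ v' : Fin (m+1) → Fin n → F)) := by
        apply Submodule.span_mono
        intro z hz
        obtain ⟨j, rfl⟩ := hz
        exact ⟨j.succ, by simp⟩
      have h0 : v₀ ∈ Submodule.span F (Set.range (Fin.cons v₀ v' : Fin (m+1) → Fin n → F)) :=
        Submodule.subset_span ⟨0, by simp⟩
      have : u = herm q v₀ u • v₀ + (u - herm q v₀ u • v₀) := by ring_nf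
      rw [this]
      exact Submodule.add_mem _ (Submodule.smul_mem _ _ h0) (hsub h2)
    · intro i j
      refine Fin.cases ?_ (fun i' => ?_) i
      · refine Fin.cases ?_ (fun j' => ?_) j
        · simpa using hv₀v₀
        · have h1 := ((hmemW' _).mp (hv'W j')).2
          rw [Fin.cons_zero, Fin.cons_succ, h1,
            if_neg (fun h => Fin.succ_ne_zero j' h.symm)]
      · refine Fin.cases ?_ (fun j' => ?_) j
        · have h0 : herm q v₀ (v' i') = 0 := ((hmemW' _).mp (hv'W i')).2
          have h1 : herm q (v' i') v₀ = 0 := by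
            rw [herm_swap hadd hss hq1 v₀ (v' i'), h0, zero_pow (by omega)]
          rw [Fin.cons_succ, Fin.cons_zero, h1, if_neg (Fin.succ_ne_zero i')]
        · have h1 := hv'on i' j'
          rw [Fin.cons_succ, Fin.cons_succ, h1]
          simp [Fin.succ_inj]
end onb
section pair
variable {q n : ℕ} {F : Type} [Field F]
variable (hadd : ∀ a b : F, (a + b) ^ q = a ^ q + b ^ q)
variable (hss : ∀ a : F, (a ^ q) ^ q = a)
variable (hq1 : 1 ≤ q)
variable (hex : ∃ c : F, c ^ q ≠ c)
variable (hnorm : ∀ a : F, a ^ q = a → ∃ c : F, c ^ q * c = a)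

def Gmat (m : ℕ) (F : Type) [Field F] : Matrix (Fin 2 ⊕ Fin m) (Fin 2 ⊕ Fin m) F :=
  Matrix.of fun j k => match j, k with
  | .inl a, .inl b => if a = b then 0 else 1
  | .inr a, .inr b => if a = b then 1 else 0
  | _, _ => 0

include hadd hss hq1 hex hnorm in
theorem pair_basis (x y : Fin n → F) (hli : LinearIndependent F ![x, y])
    (hx : herm q x x = 0) (hy : herm q y y = 0) (hxy : herm q x y = 1) :
    ∃ (M : Matrix (Fin n) (Fin 2 ⊕ Fin (n - 2)) F)
      (N : Matrix (Fin 2 ⊕ Fin (n - 2)) (Fin n) F),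
      M * N = 1 ∧ N * M = 1 ∧ (M.map (· ^ q))ᵀ * M = Gmat (n - 2) F ∧
      M *ᵥ Pi.single (Sum.inl 0) 1 = x ∧ M *ᵥ Pi.single (Sum.inl 1) 1 = y := by
  classical
  have hyx : herm q y x = 1 := by rw [herm_swap hadd hss hq1 x y, hxy, one_pow]
  set W : Submodule F (Fin n → F) :=
    LinearMap.ker (hermMap q x) ⊓ LinearMap.ker (hermMap q y) with hWdef
  have hmemW : ∀ u, u ∈ W ↔ herm q x u = 0 ∧ herm q y u = 0 := by
    intro u; simp [hWdef, LinearMap.mem_ker]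
  have hdec : ∀ u : Fin n → F, u - herm q y u • x - herm q x u • y ∈ W := by
    intro u
    rw [hmemW]
    constructor
    · rw [herm_sub_right, herm_sub_right, herm_smul_right, herm_smul_right, hx, hxy]
      ring
    · rw [herm_sub_right, herm_sub_right, herm_smul_right, herm_smul_right, hy, hyx]
      ring
  have hWnd : Nondeg q W := by
    intro w' hw' hall
    by_contra hne
    obtain ⟨j, hj⟩ : ∃ j, w' j ≠ 0 := by
      by_contra hall'
      push_neg at hall'
      exact hne (funext hall')
    set u : Fin n → F := Pi.single j 1 with hu
    have huw : herm q u w' = w' j := by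
      rw [herm]
      rw [Finset.sum_eq_single j]
      · simp [hu]
      · intro i _ hij
        simp [hu, Pi.single_eq_of_ne hij, zero_pow (show q ≠ 0 by omega)]
      · simp
    have h2 := hall _ (hdec u)
    have h3 : herm q (u - herm q y u • x - herm q x u • y) w' =
        herm q u w' - (herm q y u) ^ q * herm q x w' - (herm q x u) ^ q * herm q y w' := by
      rw [herm_sub_left hadd hq1, herm_sub_left hadd hq1, herm_smul_left, herm_smul_left]
    rw [h3, ((hmemW w').mp hw').1, ((hmemW w').mp hw').2, huw] at h2
    apply hj
    linear_combination h2
  -- dimension count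
  have hsup : (⊤ : Submodule F (Fin n → F)) = Submodule.span F {x, y} ⊔ W := by
    apply le_antisymm
    · intro u _
      have h1 : herm q y u • x + herm q x u • y ∈ Submodule.span F ({x, y} : Set (Fin n → F)) :=
        Submodule.mem_span_pair.mpr ⟨_, _, rfl⟩
      have h2 := hdec u
      have : u = (herm q y u • x + herm q x u • y) + (u - herm q y u • x - herm q x u • y) := by
        module
      rw [this]
      exact Submodule.add_mem_sup h1 h2
    · exact le_top
  have hdisj : Submodule.span F ({x, y} : Set (Fin n → F)) ⊓ W = ⊥ := by
    rw [Submodule.eq_bot_iff]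
    rintro u ⟨hu1, hu2⟩
    obtain ⟨a, b, rfl⟩ := Submodule.mem_span_pair.mp hu1
    obtain ⟨h1, h2⟩ := (hmemW _).mp hu2
    rw [herm_add_right, herm_smul_right, herm_smul_right, hx, hxy] at h1
    rw [herm_add_right, herm_smul_right, herm_smul_right, hy, hyx] at h2
    have ha : a = 0 := by linear_combination h2
    have hb : b = 0 := by linear_combination h1
    rw [ha, hb]
    module
  have hspan2 : Module.finrank F (Submodule.span F ({x, y} : Set (Fin n → F))) = 2 := by
    have := finrank_span_eq_card (R := F) hli
    rw [show Set.range ![x, y] = {x, y} by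
      simp [Matrix.range_cons, Matrix.range_empty, Set.pair_comm]] at this
    simpa using this
  have hn : 2 + Module.finrank F W = n := by
    have h1 := Submodule.finrank_sup_add_finrank_inf_eq
      (Submodule.span F ({x, y} : Set (Fin n → F))) W
    rw [hdisj, ← hsup, hspan2, finrank_bot, finrank_top] at h1
    simpa using h1.symm
  have hrkW : Module.finrank F W = n - 2 := by omega
  obtain ⟨v, hvW, hvspan, hvon⟩ := onb hadd hss hq1 hex hnorm (n - 2) W hrkW hWnd
  -- the matrix
  set cols : Fin 2 ⊕ Fin (n - 2) → Fin n → F := Sum.elim ![x, y] v with hcols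
  set M : Matrix (Fin n) (Fin 2 ⊕ Fin (n - 2)) F := Matrix.of fun i j => cols j i with hM
  have hcol : ∀ j, (fun i => M i j) = cols j := fun j => rfl
  -- Gram matrix
  have hgram : (M.map (· ^ q))ᵀ * M = Gmat (n - 2) F := by
    ext j k
    have : ((M.map (· ^ q))ᵀ * M) j k = herm q (cols j) (cols k) := by
      simp [Matrix.mul_apply, Matrix.transpose_apply, Matrix.map_apply, herm, hM]
    rw [this]
    have hvx : ∀ i, herm q x (v i) = 0 := fun i => ((hmemW _).mp (hvW i)).1
    have hvy : ∀ i, herm q y (v i) = 0 := fun i => ((hmemW _).mp (hvW i)).2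
    have hxv : ∀ i, herm q (v i) x = 0 := fun i => by
      rw [herm_swap hadd hss hq1, hvx i, zero_pow (show q ≠ 0 by omega)]
    have hyv : ∀ i, herm q (v i) y = 0 := fun i => by
      rw [herm_swap hadd hss hq1, hvy i, zero_pow (show q ≠ 0 by omega)]
    rcases j with a | j' <;> rcases k with b | k'
    · fin_cases a <;> fin_cases b
      · simpa [Gmat, hcols] using hx
      · simpa [Gmat, hcols] using hxy
      · simpa [Gmat, hcols] using hyx
      · simpa [Gmat, hcols] using hy
    · fin_cases a <;> simp [Gmat, hcols, hvx, hvy]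
    · fin_cases b <;> simp [Gmat, hcols, hxv, hyv]
    · simp [Gmat, hcols, hvon j' k']
  -- invertibility
  have hLsum : ∀ c : Fin 2 ⊕ Fin (n - 2) → F,
      Matrix.toLin' M c = ∑ j, c j • cols j := by
    intro c
    ext i
    rw [Matrix.toLin'_apply]
    simp [Matrix.mulVec, dotProduct, hM, Finset.sum_apply, mul_comm]
  have hinj : Function.Injective (Matrix.toLin' M) := by
    rw [← LinearMap.ker_eq_bot, Submodule.eq_bot_iff]
    intro c hc
    rw [LinearMap.mem_ker, hLsum] at hc
    have hsum : ∑ j, c j • cols j =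
        (c (Sum.inl 0) • x + c (Sum.inl 1) • y) + ∑ i', c (Sum.inr i') • v i' := by
      rw [Fintype.sum_sum_type]
      simp [hcols, Fin.sum_univ_two]
    have hvzero : ∀ i', c (Sum.inr i') = 0 := by
      intro i'
      have h0 : herm q (v i') (∑ j, c j • cols j) = 0 := by rw [hc]; simp [herm]
      rw [herm_sum_right] at h0
      have : ∀ j, herm q (v i') (c j • cols j) = c j * herm q (v i') (cols j) :=
        fun j => herm_smul_right _ _ _
      simp only [this] at h0
      rw [Fintype.sum_sum_type] at h0
      have hx0 : ∀ i'', herm q (v i'') x = 0 := fun i'' => by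
        rw [herm_swap hadd hss hq1, ((hmemW _).mp (hvW i'')).1,
          zero_pow (show q ≠ 0 by omega)]
      have hy0 : ∀ i'', herm q (v i'') y = 0 := fun i'' => by
        rw [herm_swap hadd hss hq1, ((hmemW _).mp (hvW i'')).2,
          zero_pow (show q ≠ 0 by omega)]
      have h1 : ∑ a : Fin 2, c (Sum.inl a) * herm q (v i') (cols (Sum.inl a)) = 0 := by
        rw [Fin.sum_univ_two]
        simp [hcols, hx0 i', hy0 i']
      rw [h1, zero_add] at h0
      have h2 : ∑ i'' : Fin (n - 2), c (Sum.inr i'') * herm q (v i') (cols (Sum.inr i'')) =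
          c (Sum.inr i') := by
        rw [Finset.sum_eq_single i']
        · simp [hcols, hvon i' i']
        · intro b _ hb
          simp [hcols, hvon i' b, (Ne.symm hb : ¬ i' = b)]
        · simp
      rw [h2] at h0
      exact h0
    have hpair : c (Sum.inl 0) • x + c (Sum.inl 1) • y = 0 := by
      rw [hsum] at hc
      have : ∑ i', c (Sum.inr i') • v i' = 0 := by
        simp [hvzero]
      rw [this, add_zero] at hc
      exact hc
    obtain ⟨h01, h11⟩ := LinearIndependent.pair_iff.mp hli _ _ hpair
    funext j
    rcases j with a | i'
    · fin_cases a
      · exact h01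
      · exact h11
    · exact hvzero i'
  have hfr : Module.finrank F (Fin 2 ⊕ Fin (n - 2) → F) = Module.finrank F (Fin n → F) := by
    simp [Module.finrank_pi, Fintype.card_sum]
    omega
  have hsurj : Function.Surjective (Matrix.toLin' M) :=
    (LinearMap.injective_iff_surjective_of_finrank_eq_finrank hfr).mp hinj
  set Leq := LinearEquiv.ofBijective (Matrix.toLin' M) ⟨hinj, hsurj⟩ with hLeq
  set N : Matrix (Fin 2 ⊕ Fin (n - 2)) (Fin n) F :=
    LinearMap.toMatrix' (Leq.symm : (Fin n → F) →ₗ[F] (Fin 2 ⊕ Fin (n - 2)) → F) with hN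
  have hNlin : Matrix.toLin' N = (Leq.symm : (Fin n → F) →ₗ[F] _) :=
    Matrix.toLin'_toMatrix' _
  have hMN : M * N = 1 := by
    apply Matrix.toLin'.injective
    rw [Matrix.toLin'_mul, hNlin, Matrix.toLin'_one]
    refine LinearMap.ext fun u => ?_
    simp only [LinearMap.comp_apply, LinearMap.id_apply]
    exact Leq.apply_symm_apply u
  have hNM : N * M = 1 := by
    apply Matrix.toLin'.injective
    rw [Matrix.toLin'_mul, hNlin, Matrix.toLin'_one]
    refine LinearMap.ext fun c => ?_
    simp only [LinearMap.comp_apply, LinearMap.id_apply]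
    exact Leq.symm_apply_apply c
  refine ⟨M, N, hMN, hNM, hgram, ?_, ?_⟩
  · rw [Matrix.mulVec_single_one]
    ext i
    simp [hM, hcols]
  · rw [Matrix.mulVec_single_one]
    ext i
    simp [hM, hcols]
end pair

/-- For `i = 1, 2`, let `xᵢ, yᵢ` be linearly independent isotropic vectors
with `xᵢ* yᵢ ≠ 0`. Then some unitary `P` maps `x₁` to `x₂` and `y₁` to a
nonzero multiple of `y₂`. -/
theorem unitary_transitive_on_hyperbolic_pairs
    (q : ℕ) (hq : IsPrimePow q)
    (F : Type) [Field F] [Fintype F]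
    (hF : Fintype.card F = q ^ 2) (n : ℕ)
    (x₁ y₁ x₂ y₂ : Fin n → F)
    (hli1 : LinearIndependent F ![x₁, y₁])
    (hli2 : LinearIndependent F ![x₂, y₂])
    (hx1 : (fun i => (x₁ i) ^ q) ⬝ᵥ x₁ = 0)
    (hy1 : (fun i => (y₁ i) ^ q) ⬝ᵥ y₁ = 0)
    (hxy1 : (fun i => (x₁ i) ^ q) ⬝ᵥ y₁ ≠ 0)
    (hx2 : (fun i => (x₂ i) ^ q) ⬝ᵥ x₂ = 0)
    (hy2 : (fun i => (y₂ i) ^ q) ⬝ᵥ y₂ = 0)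
    (hxy2 : (fun i => (x₂ i) ^ q) ⬝ᵥ y₂ ≠ 0) :
    ∃ (P : Matrix (Fin n) (Fin n) F) (b : F), b ≠ 0 ∧
      (P.map (· ^ q))ᵀ * P = 1 ∧ P *ᵥ x₁ = x₂ ∧ P *ᵥ y₁ = b • y₂ := by
  classical
  have hq2 : 2 ≤ q := hq.two_le
  have hq1 : 1 ≤ q := by omega
  have hadd := sig_add hq hF
  have hss := sig_sig hF
  have hnorm := norm_surj hq hF
  have hex : ∃ c : F, c ^ q ≠ c := by
    by_contra hcon
    push_neg at hcon
    obtain ⟨hne, hdeg⟩ := xd_sub_ne_zero (F := F) (by omega : 1 ≤ q) X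
      (by simp [natDegree_X]; omega)
    have := roots_card_bound _ hne hdeg.le Finset.univ
      (fun c _ => by simp [IsRoot, sub_eq_zero, hcon c])
    rw [Finset.card_univ, hF] at this
    nlinarith
  -- translate hypotheses
  have hh : ∀ u v : Fin n → F, (fun i => (u i) ^ q) ⬝ᵥ v = herm q u v := fun u v => rfl
  rw [hh] at hx1 hy1 hxy1 hx2 hy2 hxy2
  set c₁ := herm q x₁ y₁ with hc₁
  set c₂ := herm q x₂ y₂ with hc₂
  set y₁' := c₁⁻¹ • y₁ with hy₁'
  set y₂' := c₂⁻¹ • y₂ with hy₂'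
  have hprep : ∀ (x y : Fin n → F), LinearIndependent F ![x, y] → herm q y y = 0 →
      (c : F) → c = herm q x y → c ≠ 0 →
      LinearIndependent F ![x, c⁻¹ • y] ∧ herm q (c⁻¹ • y) (c⁻¹ • y) = 0 ∧
        herm q x (c⁻¹ • y) = 1 := by
    intro x y hli hyy c hc hcne
    refine ⟨?_, ?_, ?_⟩
    · rw [LinearIndependent.pair_iff]
      intro s t hst
      rw [smul_smul] at hst
      obtain ⟨hs, ht⟩ := LinearIndependent.pair_iff.mp hli _ _ hst
      exact ⟨hs, by field_simp at ht; simpa using ht⟩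
    · rw [herm_smul_left, herm_smul_right, hyy]
      ring
    · rw [herm_smul_right, ← hc, inv_mul_cancel₀ hcne]
  obtain ⟨hli1', hy1', hxy1'⟩ := hprep x₁ y₁ hli1 hy1 c₁ hc₁ hxy1
  obtain ⟨hli2', hy2', hxy2'⟩ := hprep x₂ y₂ hli2 hy2 c₂ hc₂ hxy2
  obtain ⟨M₁, N₁, hMN₁, hNM₁, hgram₁, hMx₁, hMy₁⟩ :=
    pair_basis hadd hss hq1 hex hnorm x₁ y₁' hli1' hx1 hy1' hxy1'
  obtain ⟨M₂, N₂, hMN₂, hNM₂, hgram₂, hMx₂, hMy₂⟩ :=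
    pair_basis hadd hss hq1 hex hnorm x₂ y₂' hli2' hx2 hy2' hxy2'
  set σR : F →+* F :=
    { toFun := fun a => a ^ q
      map_one' := one_pow q
      map_mul' := fun a b => mul_pow a b q
      map_zero' := zero_pow (by omega)
      map_add' := hadd } with hσR
  have hmapP : ∀ {k l m : Type} [Fintype l] (A : Matrix k l F) (B : Matrix l m F),
      ((A * B).map (· ^ q)) = (A.map (· ^ q)) * (B.map (· ^ q)) := by
    intro k l m _ A B
    exact Matrix.map_mul (f := σR)
  set P := M₂ * N₁ with hP
  refine ⟨P, c₁ * c₂⁻¹, ?_, ?_, ?_, ?_⟩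
  · exact mul_ne_zero hxy1 (inv_ne_zero hxy2)
  · have h1 : (P.map (· ^ q))ᵀ * P =
        (N₁.map (· ^ q))ᵀ * (((M₂.map (· ^ q))ᵀ * M₂) * N₁) := by
      rw [hP, hmapP, Matrix.transpose_mul]
      simp only [Matrix.mul_assoc]
    rw [h1, hgram₂, ← hgram₁]
    have h2 : (N₁.map (· ^ q))ᵀ * ((M₁.map (· ^ q))ᵀ * M₁ * N₁) =
        ((M₁ * N₁).map (· ^ q))ᵀ * (M₁ * N₁) := by
      rw [hmapP, Matrix.transpose_mul]
      simp only [Matrix.mul_assoc]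
    rw [h2, hMN₁]
    rw [Matrix.map_one (fun x => x ^ q) (zero_pow (show q ≠ 0 by omega)) (one_pow q)]
    simp
  · have hN : N₁ *ᵥ x₁ = Pi.single (Sum.inl 0) 1 := by
      rw [← hMx₁, Matrix.mulVec_mulVec, hNM₁, Matrix.one_mulVec]
    rw [hP, ← Matrix.mulVec_mulVec, hN, hMx₂]
  · have hy1eq : y₁ = c₁ • y₁' := by
      rw [hy₁', smul_smul, mul_inv_cancel₀ hxy1, one_smul]
    have hN : N₁ *ᵥ y₁' = Pi.single (Sum.inl 1) 1 := by
      rw [← hMy₁, Matrix.mulVec_mulVec, hNM₁, Matrix.one_mulVec]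
    rw [hy1eq, Matrix.mulVec_smul, hP, ← Matrix.mulVec_mulVec, hN, hMy₂, hy₂',
      smul_smul]
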